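/- There exists a constant C > 0, independent of h, the center of K, u and w, such that for every h > 0, every square K of half side h, every function u of class C⁴ on a neighborhood of K, and every w in the shape space P(K) = P₂(K) + span{x₁³, x₂³}, the contribution of the mixed tangential–normal derivatives on the pair of opposite vertical edges satisfies |∫_{x₂c−h}^{x₂c+h} [ (∂²u/∂x₁∂x₂)(x₁c+h, x₂) · (R⁰_{e₂}(∂w/∂x₂))(x₂) − (∂²u/∂x₁∂x₂)(x₁c−h, x₂) · (R⁰_{e₄}(∂w/∂x₂))(x₂) ] dx₂| ≤ C h² |u|_{H⁴(K)} |w|_{H²(K)}. -/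

import Mathlib

open MeasureTheory

/-- Partial derivative in the first variable of a curried function on `ℝ²`. -/
noncomputable def pdx (f : ℝ → ℝ → ℝ) : ℝ → ℝ → ℝ := fun x y => deriv (fun t => f t y) x

/-- Partial derivative in the second variable of a curried function on `ℝ²`. -/
noncomputable def pdy (f : ℝ → ℝ → ℝ) : ℝ → ℝ → ℝ := fun x y => deriv (fun t => f x t) y

/-- Membership in the shape space `P(K) = P₂(K) + span{x₁³, x₂³}` of the two-dimensional
rectangular Morley element. -/
def MorleyShape2 (w : ℝ → ℝ → ℝ) : Prop :=
  ∃ c0 c1 c2 c3 c4 c5 c6 c7 : ℝ, ∀ x y : ℝ,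
    w x y = c0 + c1 * x + c2 * y + c3 * x ^ 2 + c4 * (x * y) + c5 * y ^ 2
      + c6 * x ^ 3 + c7 * y ^ 3

/-- The `H²` seminorm of `v` on the rectangle `[a,b] × [c,d]`, each ordering of mixed
partial derivatives counted. -/
noncomputable def semiH2R (v : ℝ → ℝ → ℝ) (a b c d : ℝ) : ℝ :=
  Real.sqrt (∫ x in a..b, ∫ y in c..d,
    (pdx (pdx v) x y) ^ 2 + (pdx (pdy v) x y) ^ 2 + (pdy (pdx v) x y) ^ 2
      + (pdy (pdy v) x y) ^ 2)

/-- The `H⁴` seminorm of `u` on the rectangle `[a,b] × [c,d]`, each ordering of mixed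
partial derivatives counted (hence the binomial coefficients). -/
noncomputable def semiH4R (u : ℝ → ℝ → ℝ) (a b c d : ℝ) : ℝ :=
  Real.sqrt (∫ x in a..b, ∫ y in c..d,
    (pdx (pdx (pdx (pdx u))) x y) ^ 2 + 4 * (pdx (pdx (pdx (pdy u))) x y) ^ 2
      + 6 * (pdx (pdx (pdy (pdy u))) x y) ^ 2 + 4 * (pdx (pdy (pdy (pdy u))) x y) ^ 2
      + (pdy (pdy (pdy (pdy u))) x y) ^ 2)

/-- `u` is of class `C⁴` on a neighborhood of the rectangle `[a,b] × [c,d]`. -/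
def C4Near (u : ℝ → ℝ → ℝ) (a b c d : ℝ) : Prop :=
  ∃ U : Set (ℝ × ℝ), IsOpen U ∧ Set.Icc a b ×ˢ Set.Icc c d ⊆ U ∧
    ContDiffOn ℝ 4 (fun p : ℝ × ℝ => u p.1 p.2) U

noncomputable def Dx (g : ℝ × ℝ → ℝ) : ℝ × ℝ → ℝ := fun p => fderiv ℝ g p (1, 0)
noncomputable def Dy (g : ℝ × ℝ → ℝ) : ℝ × ℝ → ℝ := fun p => fderiv ℝ g p (0, 1)

lemma hasDerivAt_sliceX {g : ℝ × ℝ → ℝ} {x y : ℝ} (hg : DifferentiableAt ℝ g (x, y)) :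
    HasDerivAt (fun t => g (t, y)) (Dx g (x, y)) x :=
  hg.hasFDerivAt.comp_hasDerivAt x (HasDerivAt.prodMk (hasDerivAt_id x) (hasDerivAt_const x y))

lemma hasDerivAt_sliceY {g : ℝ × ℝ → ℝ} {x y : ℝ} (hg : DifferentiableAt ℝ g (x, y)) :
    HasDerivAt (fun t => g (x, t)) (Dy g (x, y)) y :=
  hg.hasFDerivAt.comp_hasDerivAt y (HasDerivAt.prodMk (hasDerivAt_const y x) (hasDerivAt_id y))

lemma diffOnU {U : Set (ℝ × ℝ)} (hU : IsOpen U) {n : WithTop ℕ∞} {g : ℝ × ℝ → ℝ}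
    (hg : ContDiffOn ℝ n g U) (hn : 1 ≤ n) : ∀ q ∈ U, DifferentiableAt ℝ g q :=
  fun q hq => (hg.contDiffAt (hU.mem_nhds hq)).differentiableAt (zero_lt_one.trans_le hn).ne'

lemma contDiffOn_Dx {U : Set (ℝ × ℝ)} (hU : IsOpen U) {n m : WithTop ℕ∞} {g : ℝ × ℝ → ℝ}
    (hg : ContDiffOn ℝ n g U) (hmn : m + 1 ≤ n) : ContDiffOn ℝ m (Dx g) U :=
  (hg.fderiv_of_isOpen hU hmn).clm_apply contDiffOn_const

lemma contDiffOn_Dy {U : Set (ℝ × ℝ)} (hU : IsOpen U) {n m : WithTop ℕ∞} {g : ℝ × ℝ → ℝ}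
    (hg : ContDiffOn ℝ n g U) (hmn : m + 1 ≤ n) : ContDiffOn ℝ m (Dy g) U :=
  (hg.fderiv_of_isOpen hU hmn).clm_apply contDiffOn_const

lemma pdx_eq_Dx {U : Set (ℝ × ℝ)} (hU : IsOpen U) {g : ℝ × ℝ → ℝ}
    (hd : ∀ q ∈ U, DifferentiableAt ℝ g q) {v : ℝ → ℝ → ℝ}
    (hv : ∀ q ∈ U, v q.1 q.2 = g q) :
    ∀ q ∈ U, pdx v q.1 q.2 = Dx g q := by
  rintro ⟨x, y⟩ hq
  have hc : Continuous fun t : ℝ => ((t, y) : ℝ × ℝ) := continuous_id.prodMk continuous_const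
  have hmem : ∀ᶠ t in nhds x, ((t, y) : ℝ × ℝ) ∈ U :=
    hc.continuousAt.preimage_mem_nhds (hU.mem_nhds hq)
  have hev : (fun t => v t y) =ᶠ[nhds x] fun t => g (t, y) := by
    filter_upwards [hmem] with t ht using hv (t, y) ht
  show deriv (fun t => v t y) x = _
  rw [hev.deriv_eq]
  exact (hasDerivAt_sliceX (hd _ hq)).deriv

lemma pdy_eq_Dy {U : Set (ℝ × ℝ)} (hU : IsOpen U) {g : ℝ × ℝ → ℝ}
    (hd : ∀ q ∈ U, DifferentiableAt ℝ g q) {v : ℝ → ℝ → ℝ}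
    (hv : ∀ q ∈ U, v q.1 q.2 = g q) :
    ∀ q ∈ U, pdy v q.1 q.2 = Dy g q := by
  rintro ⟨x, y⟩ hq
  have hc : Continuous fun t : ℝ => ((x, t) : ℝ × ℝ) := continuous_const.prodMk continuous_id
  have hmem : ∀ᶠ t in nhds y, ((x, t) : ℝ × ℝ) ∈ U :=
    hc.continuousAt.preimage_mem_nhds (hU.mem_nhds hq)
  have hev : (fun t => v x t) =ᶠ[nhds y] fun t => g (x, t) := by
    filter_upwards [hmem] with t ht using hv (x, t) ht
  show deriv (fun t => v x t) y = _
  rw [hev.deriv_eq]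
  exact (hasDerivAt_sliceY (hd _ hq)).deriv

lemma Dx_congrU {U : Set (ℝ × ℝ)} (hU : IsOpen U) {g1 g2 : ℝ × ℝ → ℝ}
    (h : ∀ q ∈ U, g1 q = g2 q) {q : ℝ × ℝ} (hq : q ∈ U) : Dx g1 q = Dx g2 q := by
  have hev : g1 =ᶠ[nhds q] g2 := by
    filter_upwards [hU.mem_nhds hq] with p hp using h p hp
  simp only [Dx]
  rw [hev.fderiv_eq]

lemma Dy_Dx_swap {U : Set (ℝ × ℝ)} (hU : IsOpen U) {n : WithTop ℕ∞} {g : ℝ × ℝ → ℝ}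
    (hg : ContDiffOn ℝ n g U) (hn : 2 ≤ n) :
    ∀ q ∈ U, Dy (Dx g) q = Dx (Dy g) q := by
  intro q hq
  have hat : ContDiffAt ℝ n g q := hg.contDiffAt (hU.mem_nhds hq)
  have hsymm := hat.isSymmSndFDerivAt (by simpa [minSmoothness_of_isRCLikeNormedField] using hn)
  have hdf : DifferentiableAt ℝ (fderiv ℝ g) q := by
    have h2 : ContDiffAt ℝ 2 g q := hat.of_le hn
    exact (h2.fderiv_right (m := 1) (by norm_num)).differentiableAt one_ne_zero
  have e1 : ∀ v w : ℝ × ℝ, fderiv ℝ (fun p => fderiv ℝ g p v) q w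
      = fderiv ℝ (fderiv ℝ g) q w v := by
    intro v w
    rw [fderiv_clm_apply hdf (differentiableAt_const v)]
    simp
  show fderiv ℝ (fun p => fderiv ℝ g p (1, 0)) q (0, 1)
      = fderiv ℝ (fun p => fderiv ℝ g p (0, 1)) q (1, 0)
  rw [e1, e1]
  exact hsymm.eq _ _

lemma l1_le_sqrt_l2 {α : Type*} [MeasurableSpace α] (μ : Measure α) (s : Set α) {f : α → ℝ}
    (hf : IntegrableOn f s μ) (hf2 : IntegrableOn (fun x => f x ^ 2) s μ) {ρ N : ℝ}
    (hρ : 0 < ρ) (hN : 0 ≤ N) (hvol : (μ s).toReal ≤ ρ ^ 2) (hfin : μ s < ⊤)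
    (hint : ∫ x in s, f x ^ 2 ∂μ ≤ N ^ 2) :
    ∫ x in s, |f x| ∂μ ≤ ρ * N := by
  refine le_of_forall_pos_le_add (fun ε hε => ?_)
  set t := (ρ * N + ε) / ρ ^ 2 with ht
  have htpos : 0 < t := by positivity
  have hconst : IntegrableOn (fun _ : α => t / 2) s μ :=
    integrableOn_const hfin.ne
  have hdiv : IntegrableOn (fun x => f x ^ 2 / (2 * t)) s μ := hf2.div_const (2 * t)
  have step : ∫ x in s, |f x| ∂μ ≤ ∫ x in s, (t / 2 + f x ^ 2 / (2 * t)) ∂μ := by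
    refine integral_mono hf.abs (hconst.add hdiv) (fun x => ?_)
    have h1 : 0 ≤ (t - |f x|) ^ 2 := sq_nonneg _
    have h2 : |f x| ^ 2 = f x ^ 2 := sq_abs _
    have : 2 * t * |f x| ≤ t ^ 2 + f x ^ 2 := by nlinarith
    rw [div_add_div _ _ (two_ne_zero) (by positivity : (2:ℝ) * t ≠ 0)]
    rw [le_div_iff₀ (by positivity)]
    nlinarith
  have split : ∫ x in s, (t / 2 + f x ^ 2 / (2 * t)) ∂μ
      = (t / 2) * (μ s).toReal + (∫ x in s, f x ^ 2 ∂μ) / (2 * t) := by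
    rw [integral_add hconst hdiv, setIntegral_const, integral_div]
    rw [smul_eq_mul, measureReal_def]; ring
  have bound : (t / 2) * (μ s).toReal + (∫ x in s, f x ^ 2 ∂μ) / (2 * t) ≤ ρ * N + ε := by
    have h1 : (t / 2) * (μ s).toReal ≤ (t / 2) * ρ ^ 2 := by
      apply mul_le_mul_of_nonneg_left hvol (by positivity)
    have h2 : (∫ x in s, f x ^ 2 ∂μ) / (2 * t) ≤ N ^ 2 / (2 * t) := by
      gcongr
    have h3 : (t / 2) * ρ ^ 2 = (ρ * N + ε) / 2 := by
      rw [ht]; field_simp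
    have hρN : 0 ≤ ρ * N := by positivity
    have h4 : N ^ 2 / (2 * t) ≤ (ρ * N + ε) / 2 := by
      have key : N ^ 2 * ρ ^ 2 ≤ (ρ * N + ε) ^ 2 := by nlinarith
      calc N ^ 2 / (2 * t) = N ^ 2 * ρ ^ 2 / (2 * (ρ * N + ε)) := by
            rw [ht]; field_simp
        _ ≤ (ρ * N + ε) ^ 2 / (2 * (ρ * N + ε)) := by gcongr
        _ = (ρ * N + ε) / 2 := by field_simp
    linarith
  rw [split] at step
  linarith

set_option maxHeartbeats 4000000 in
/-- Superconvergence of the tangential-normal boundary term on a pair of opposite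
vertical edges of one element. -/
theorem stmt_7 :
    ∃ C > (0:ℝ), ∀ h : ℝ, 0 < h → ∀ x1c x2c : ℝ, ∀ u w : ℝ → ℝ → ℝ,
      C4Near u (x1c - h) (x1c + h) (x2c - h) (x2c + h) → MorleyShape2 w →
      |∫ y in (x2c - h)..(x2c + h),
          pdx (pdy u) (x1c + h) y
              * (pdy w (x1c + h) y
                - (1 / (2 * h)) * (∫ t in (x2c - h)..(x2c + h), pdy w (x1c + h) t))
            - pdx (pdy u) (x1c - h) y
              * (pdy w (x1c - h) y
                - (1 / (2 * h)) * (∫ t in (x2c - h)..(x2c + h), pdy w (x1c - h) t))|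
        ≤ C * h ^ 2 * semiH4R u (x1c - h) (x1c + h) (x2c - h) (x2c + h) * semiH2R w (x1c - h) (x1c + h) (x2c - h) (x2c + h) := by
  refine ⟨2, by norm_num, ?_⟩
  intro h hh x1c x2c u w hC4 hMor
  obtain ⟨U, hUo, hKU, hF⟩ := hC4
  obtain ⟨c0, c1, c2, c3, c4, c5, c6, c7, hw⟩ := hMor
  set a := x1c - h with ha
  set b := x1c + h with hb
  set c := x2c - h with hc
  set d := x2c + h with hd
  clear_value a b c d
  have hab : a ≤ b := by rw [ha, hb]; linarith
  have hcd : c ≤ d := by rw [hc, hd]; linarith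
  have hdc : d - c = 2 * h := by rw [hc, hd]; ring
  have hba : b - a = 2 * h := by rw [ha, hb]; ring
  have hh0 : h ≠ 0 := ne_of_gt hh
  -- ## w-side derivative formulas
  have hwx : ∀ x : ℝ, (fun t => w x t) = fun t : ℝ => c0 + c1 * x + c2 * t + c3 * x ^ 2
      + c4 * (x * t) + c5 * t ^ 2 + c6 * x ^ 3 + c7 * t ^ 3 := fun x => funext (fun t => hw x t)
  have hwy : ∀ y : ℝ, (fun t => w t y) = fun t : ℝ => c0 + c1 * t + c2 * y + c3 * t ^ 2
      + c4 * (t * y) + c5 * y ^ 2 + c6 * t ^ 3 + c7 * y ^ 3 := fun y => funext (fun t => hw t y)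
  have hpy : ∀ x y : ℝ, pdy w x y = c2 + c4 * x + 2 * c5 * y + 3 * c7 * y ^ 2 := by
    intro x y
    show deriv (fun t => w x t) y = _
    rw [hwx x]
    have H := (((((((hasDerivAt_const y (c0 + c1 * x)).add
        ((hasDerivAt_id y).const_mul c2)).add (hasDerivAt_const y (c3 * x ^ 2))).add
        (((hasDerivAt_id y).const_mul x).const_mul c4)).add
        ((hasDerivAt_pow 2 y).const_mul c5)).add (hasDerivAt_const y (c6 * x ^ 3))).add
        ((hasDerivAt_pow 3 y).const_mul c7))
    have H' : HasDerivAt (fun t : ℝ => c0 + c1 * x + c2 * t + c3 * x ^ 2 + c4 * (x * t)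
        + c5 * t ^ 2 + c6 * x ^ 3 + c7 * t ^ 3) (c2 + c4 * x + 2 * c5 * y + 3 * c7 * y ^ 2) y := by
      exact H.congr_deriv (by push_cast; ring)
    exact H'.deriv
  have hpx : ∀ x y : ℝ, pdx w x y = c1 + 2 * c3 * x + c4 * y + 3 * c6 * x ^ 2 := by
    intro x y
    show deriv (fun t => w t y) x = _
    rw [hwy y]
    have H := ((((((((hasDerivAt_const x c0).add
        ((hasDerivAt_id x).const_mul c1)).add (hasDerivAt_const x (c2 * y))).add
        ((hasDerivAt_pow 2 x).const_mul c3)).add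
        (((hasDerivAt_id x).mul_const y).const_mul c4)).add
        (hasDerivAt_const x (c5 * y ^ 2))).add
        ((hasDerivAt_pow 3 x).const_mul c6)).add (hasDerivAt_const x (c7 * y ^ 3)))
    have H' : HasDerivAt (fun t : ℝ => c0 + c1 * t + c2 * y + c3 * t ^ 2 + c4 * (t * y)
        + c5 * y ^ 2 + c6 * t ^ 3 + c7 * y ^ 3) (c1 + 2 * c3 * x + c4 * y + 3 * c6 * x ^ 2) x := by
      exact H.congr_deriv (by push_cast; ring)
    exact H'.deriv
  have hpyy : ∀ x y : ℝ, pdy (pdy w) x y = 2 * c5 + 6 * c7 * y := by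
    intro x y
    show deriv (fun t => pdy w x t) y = _
    rw [funext (hpy x)]
    have H := ((hasDerivAt_const y (c2 + c4 * x)).add
        ((hasDerivAt_id y).const_mul (2 * c5))).add ((hasDerivAt_pow 2 y).const_mul (3 * c7))
    have H' : HasDerivAt (fun t : ℝ => c2 + c4 * x + 2 * c5 * t + 3 * c7 * t ^ 2)
        (2 * c5 + 6 * c7 * y) y := by
      exact H.congr_deriv (by push_cast; ring)
    exact H'.deriv
  have hpxy : ∀ x y : ℝ, pdx (pdy w) x y = c4 := by
    intro x y
    show deriv (fun t => pdy w t y) x = _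
    rw [funext (fun t => hpy t y)]
    have H := (((hasDerivAt_const x c2).add ((hasDerivAt_id x).const_mul c4)).add
        (hasDerivAt_const x (2 * c5 * y))).add (hasDerivAt_const x (3 * c7 * y ^ 2))
    have H' : HasDerivAt (fun t : ℝ => c2 + c4 * t + 2 * c5 * y + 3 * c7 * y ^ 2) c4 x := by
      exact H.congr_deriv (by ring)
    exact H'.deriv
  have hpyx : ∀ x y : ℝ, pdy (pdx w) x y = c4 := by
    intro x y
    show deriv (fun t => pdx w x t) y = _
    rw [funext (fun t => hpx x t)]
    have H := (((hasDerivAt_const y (c1 + 2 * c3 * x)).add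
        ((hasDerivAt_id y).const_mul c4)).add (hasDerivAt_const y (3 * c6 * x ^ 2)))
    have H' : HasDerivAt (fun t : ℝ => c1 + 2 * c3 * x + c4 * t + 3 * c6 * x ^ 2) c4 y := by
      exact H.congr_deriv (by ring)
    exact H'.deriv
  have hpxx : ∀ x y : ℝ, pdx (pdx w) x y = 2 * c3 + 6 * c6 * x := by
    intro x y
    show deriv (fun t => pdx w t y) x = _
    rw [funext (fun t => hpx t y)]
    have H := (((hasDerivAt_const x c1).add
        ((hasDerivAt_id x).const_mul (2 * c3))).add (hasDerivAt_const x (c4 * y))).add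
        ((hasDerivAt_pow 2 x).const_mul (3 * c6))
    have H' : HasDerivAt (fun t : ℝ => c1 + 2 * c3 * t + c4 * y + 3 * c6 * t ^ 2)
        (2 * c3 + 6 * c6 * x) x := by
      exact H.congr_deriv (by push_cast; ring)
    exact H'.deriv
  -- ## R and S
  set m := c5 * (d ^ 2 - c ^ 2) + c7 * (d ^ 3 - c ^ 3) with hm
  set R : ℝ → ℝ := fun y => 2 * c5 * y + 3 * c7 * y ^ 2 - m / (2 * h) with hR
  set S : ℝ → ℝ := fun y => c5 * y ^ 2 + c7 * y ^ 3 - m / (2 * h) * y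
      - (c5 * c ^ 2 + c7 * c ^ 3 - m / (2 * h) * c) with hS
  clear_value m R S
  have hmean : ∀ x : ℝ, (∫ t in c..d, pdy w x t) = (c2 + c4 * x) * (d - c) + m := by
    intro x
    have hder : ∀ t ∈ Set.uIcc c d, HasDerivAt
        (fun s => (c2 + c4 * x) * s + c5 * s ^ 2 + c7 * s ^ 3) (pdy w x t) t := by
      intro t _
      rw [hpy]
      have H := (((hasDerivAt_id t).const_mul (c2 + c4 * x)).add
          ((hasDerivAt_pow 2 t).const_mul c5)).add ((hasDerivAt_pow 3 t).const_mul c7)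
      exact H.congr_deriv (by push_cast; ring)
    have hint : IntervalIntegrable (fun t => pdy w x t) MeasureTheory.volume c d := by
      apply Continuous.intervalIntegrable
      have e : (fun t => pdy w x t) = fun t => c2 + c4 * x + 2 * c5 * t + 3 * c7 * t ^ 2 :=
        funext (hpy x)
      rw [e]; fun_prop
    rw [intervalIntegral.integral_eq_sub_of_hasDerivAt hder hint, hm]; ring
  have hbracket : ∀ x y : ℝ, pdy w x y - 1 / (2 * h) * (∫ t in c..d, pdy w x t) = R y := by
    intro x y
    rw [hpy, hmean]
    simp only [hR]
    rw [hdc]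
    field_simp
    ring
  have hRd : ∀ y : ℝ, HasDerivAt S (R y) y := by
    intro y
    have H := ((((hasDerivAt_pow 2 y).const_mul c5).add
        ((hasDerivAt_pow 3 y).const_mul c7)).sub
        ((hasDerivAt_id y).const_mul (m / (2 * h)))).sub
        (hasDerivAt_const y (c5 * c ^ 2 + c7 * c ^ 3 - m / (2 * h) * c))
    simp only [hS, hR]
    exact H.congr_deriv (by push_cast; ring)
  have hS0c : S c = 0 := by simp only [hS]; ring
  have hS0d : S d = 0 := by
    have e : S d = m - m / (2 * h) * (d - c) := by simp only [hS, hm]; ring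
    rw [e, hdc]; field_simp; ring
  set A := 2 * c5 + 6 * c7 * x2c with hA
  set B := 3 * c7 with hB
  clear_value A B
  have hSid : ∀ y : ℝ, S y = A * ((y - x2c) ^ 2 - h ^ 2) / 2
      + B / 3 * ((y - x2c) ^ 3 - h ^ 2 * (y - x2c)) := by
    intro y
    simp only [hS, hm, hA, hB, hc, hd]
    field_simp
    ring
  set M := h ^ 2 * (|A| / 2 + |B| / 3 * h) with hMdef
  clear_value M
  have hSb : ∀ y ∈ Set.Icc c d, |S y| ≤ M := by
    intro y hy
    obtain ⟨hy1, hy2⟩ := hy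
    rw [hc] at hy1; rw [hd] at hy2
    have hs1 : |y - x2c| ≤ h := by rw [abs_le]; constructor <;> linarith
    obtain ⟨hl, hr⟩ := abs_le.mp hs1
    have h1 : |(y - x2c) ^ 2 - h ^ 2| ≤ h ^ 2 := by
      rw [abs_le]; constructor <;> nlinarith [sq_nonneg (y - x2c)]
    have h2 : |(y - x2c) ^ 3 - h ^ 2 * (y - x2c)| ≤ h ^ 3 := by
      rw [abs_le]
      constructor
      · nlinarith [mul_nonneg (by linarith : (0:ℝ) ≤ h + (y - x2c)) (sq_nonneg (h - (y - x2c)))]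
      · nlinarith [mul_nonneg (by linarith : (0:ℝ) ≤ h - (y - x2c)) (sq_nonneg (h + (y - x2c)))]
    have b1 : |A * ((y - x2c) ^ 2 - h ^ 2) / 2| ≤ |A| / 2 * h ^ 2 := by
      rw [abs_div, abs_mul, abs_two]
      nlinarith [mul_le_mul_of_nonneg_left h1 (abs_nonneg A)]
    have b2 : |B / 3 * ((y - x2c) ^ 3 - h ^ 2 * (y - x2c))| ≤ |B| / 3 * h ^ 3 := by
      rw [abs_mul, abs_div]
      have e3 : |(3:ℝ)| = 3 := by norm_num
      rw [e3]
      nlinarith [mul_le_mul_of_nonneg_left h2 (abs_nonneg B)]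
    calc |S y| = |A * ((y - x2c) ^ 2 - h ^ 2) / 2
        + B / 3 * ((y - x2c) ^ 3 - h ^ 2 * (y - x2c))| := by rw [hSid]
      _ ≤ |A * ((y - x2c) ^ 2 - h ^ 2) / 2|
          + |B / 3 * ((y - x2c) ^ 3 - h ^ 2 * (y - x2c))| := abs_add_le _ _
      _ ≤ |A| / 2 * h ^ 2 + |B| / 3 * h ^ 3 := add_le_add b1 b2
      _ ≤ M := le_of_eq (by rw [hMdef]; ring)
  have hMnn : 0 ≤ M := by rw [hMdef]; positivity
  -- ## u-side tower
  set F := (fun p : ℝ × ℝ => u p.1 p.2) with hFdef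
  have hFd : ∀ q ∈ U, DifferentiableAt ℝ F q := diffOnU hUo hF (by norm_num)
  have hg1 : ContDiffOn ℝ 3 (Dy F) U := contDiffOn_Dy hUo hF (by norm_num)
  have hg1d : ∀ q ∈ U, DifferentiableAt ℝ (Dy F) q := diffOnU hUo hg1 (by norm_num)
  have hg2 : ContDiffOn ℝ 2 (Dx (Dy F)) U := contDiffOn_Dx hUo hg1 (by norm_num)
  have hg2d : ∀ q ∈ U, DifferentiableAt ℝ (Dx (Dy F)) q := diffOnU hUo hg2 (by norm_num)
  have hg3 : ContDiffOn ℝ 1 (Dx (Dx (Dy F))) U := contDiffOn_Dx hUo hg2 (by norm_num)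
  have hg3d : ∀ q ∈ U, DifferentiableAt ℝ (Dx (Dx (Dy F))) q := diffOnU hUo hg3 (by norm_num)
  have hg4 : ContDiffOn ℝ 0 (Dy (Dx (Dx (Dy F)))) U := contDiffOn_Dy hUo hg3 (by norm_num)
  have hk2 : ContDiffOn ℝ 2 (Dy (Dy F)) U := contDiffOn_Dy hUo hg1 (by norm_num)
  have hk2d : ∀ q ∈ U, DifferentiableAt ℝ (Dy (Dy F)) q := diffOnU hUo hk2 (by norm_num)
  have hk3 : ContDiffOn ℝ 1 (Dx (Dy (Dy F))) U := contDiffOn_Dx hUo hk2 (by norm_num)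
  have hk3d : ∀ q ∈ U, DifferentiableAt ℝ (Dx (Dy (Dy F))) q := diffOnU hUo hk3 (by norm_num)
  have hk4 : ContDiffOn ℝ 0 (Dx (Dx (Dy (Dy F)))) U := contDiffOn_Dx hUo hk3 (by norm_num)
  have hxF : ContDiffOn ℝ 3 (Dx F) U := contDiffOn_Dx hUo hF (by norm_num)
  have hxFd : ∀ q ∈ U, DifferentiableAt ℝ (Dx F) q := diffOnU hUo hxF (by norm_num)
  have hx2 : ContDiffOn ℝ 2 (Dx (Dx F)) U := contDiffOn_Dx hUo hxF (by norm_num)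
  have hx2d : ∀ q ∈ U, DifferentiableAt ℝ (Dx (Dx F)) q := diffOnU hUo hx2 (by norm_num)
  have hx3 : ContDiffOn ℝ 1 (Dx (Dx (Dx F))) U := contDiffOn_Dx hUo hx2 (by norm_num)
  have hx3d : ∀ q ∈ U, DifferentiableAt ℝ (Dx (Dx (Dx F))) q := diffOnU hUo hx3 (by norm_num)
  have hx4 : ContDiffOn ℝ 0 (Dx (Dx (Dx (Dx F)))) U := contDiffOn_Dx hUo hx3 (by norm_num)
  have hT3 : ContDiffOn ℝ 1 (Dy (Dy (Dy F))) U := contDiffOn_Dy hUo hk2 (by norm_num)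
  have hT3d : ∀ q ∈ U, DifferentiableAt ℝ (Dy (Dy (Dy F))) q := diffOnU hUo hT3 (by norm_num)
  have hm31 : ContDiffOn ℝ 0 (Dx (Dx (Dx (Dy F)))) U := contDiffOn_Dx hUo hg3 (by norm_num)
  have hm13 : ContDiffOn ℝ 0 (Dx (Dy (Dy (Dy F)))) U := contDiffOn_Dx hUo hT3 (by norm_num)
  have hm04 : ContDiffOn ℝ 0 (Dy (Dy (Dy (Dy F)))) U := contDiffOn_Dy hUo hT3 (by norm_num)
  -- pd equalities on U
  have hu0 : ∀ q ∈ U, u q.1 q.2 = F q := fun q _ => rfl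
  have he1 : ∀ q ∈ U, pdy u q.1 q.2 = Dy F q := pdy_eq_Dy hUo hFd hu0
  have he2 : ∀ q ∈ U, pdx (pdy u) q.1 q.2 = Dx (Dy F) q := pdx_eq_Dx hUo hg1d he1
  have he3 : ∀ q ∈ U, pdx (pdx (pdy u)) q.1 q.2 = Dx (Dx (Dy F)) q := pdx_eq_Dx hUo hg2d he2
  have hf2 : ∀ q ∈ U, pdy (pdy u) q.1 q.2 = Dy (Dy F) q := pdy_eq_Dy hUo hg1d he1
  have hf3 : ∀ q ∈ U, pdx (pdy (pdy u)) q.1 q.2 = Dx (Dy (Dy F)) q := pdx_eq_Dx hUo hk2d hf2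
  have hf4 : ∀ q ∈ U, pdx (pdx (pdy (pdy u))) q.1 q.2 = Dx (Dx (Dy (Dy F))) q :=
    pdx_eq_Dx hUo hk3d hf3
  have ha1 : ∀ q ∈ U, pdx u q.1 q.2 = Dx F q := pdx_eq_Dx hUo hFd hu0
  have ha2 : ∀ q ∈ U, pdx (pdx u) q.1 q.2 = Dx (Dx F) q := pdx_eq_Dx hUo hxFd ha1
  have ha3 : ∀ q ∈ U, pdx (pdx (pdx u)) q.1 q.2 = Dx (Dx (Dx F)) q := pdx_eq_Dx hUo hx2d ha2
  have ha4 : ∀ q ∈ U, pdx (pdx (pdx (pdx u))) q.1 q.2 = Dx (Dx (Dx (Dx F))) q :=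
    pdx_eq_Dx hUo hx3d ha3
  have hb4 : ∀ q ∈ U, pdx (pdx (pdx (pdy u))) q.1 q.2 = Dx (Dx (Dx (Dy F))) q :=
    pdx_eq_Dx hUo hg3d he3
  have hc3 : ∀ q ∈ U, pdy (pdy (pdy u)) q.1 q.2 = Dy (Dy (Dy F)) q := pdy_eq_Dy hUo hk2d hf2
  have hc4 : ∀ q ∈ U, pdx (pdy (pdy (pdy u))) q.1 q.2 = Dx (Dy (Dy (Dy F))) q :=
    pdx_eq_Dx hUo hT3d hc3
  have hd4 : ∀ q ∈ U, pdy (pdy (pdy (pdy u))) q.1 q.2 = Dy (Dy (Dy (Dy F))) q :=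
    pdy_eq_Dy hUo hT3d hc3
  -- symmetry of mixed derivatives
  have hs1 : ∀ q ∈ U, Dy (Dx (Dx (Dy F))) q = Dx (Dy (Dx (Dy F))) q :=
    Dy_Dx_swap hUo hg2 (by norm_num)
  have hs2 : ∀ q ∈ U, Dy (Dx (Dy F)) q = Dx (Dy (Dy F)) q :=
    Dy_Dx_swap hUo hg1 (by norm_num)
  have hg4k4 : ∀ q ∈ U, Dy (Dx (Dx (Dy F))) q = Dx (Dx (Dy (Dy F))) q :=
    fun q hq => (hs1 q hq).trans (Dx_congrU hUo hs2 hq)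
  have hmemU : ∀ x y : ℝ, x ∈ Set.Icc a b → y ∈ Set.Icc c d → ((x, y) : ℝ × ℝ) ∈ U :=
    fun x y hx hy => hKU (Set.mk_mem_prod hx hy)
  -- ## continuity of R and S
  have hRc : Continuous R := by rw [hR]; fun_prop
  have hScont : Continuous S := by rw [hS]; fun_prop
  -- ## Step 1: rewrite the integrand
  have step1 : (∫ y in c..d,
        pdx (pdy u) b y * (pdy w b y - 1 / (2 * h) * ∫ t in c..d, pdy w b t)
          - pdx (pdy u) a y * (pdy w a y - 1 / (2 * h) * ∫ t in c..d, pdy w a t))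
      = ∫ y in c..d, (Dx (Dy F) (b, y) - Dx (Dy F) (a, y)) * R y := by
    apply intervalIntegral.integral_congr
    intro y hy
    dsimp only
    rw [Set.uIcc_of_le hcd] at hy
    have h1 := he2 (b, y) (hmemU b y (Set.right_mem_Icc.mpr hab) hy)
    have h2 := he2 (a, y) (hmemU a y (Set.left_mem_Icc.mpr hab) hy)
    dsimp only at h1 h2
    rw [hbracket b y, hbracket a y, h1, h2]
    ring
  -- ## Step 2: FTC in x
  have step2 : ∀ y ∈ Set.Icc c d, Dx (Dy F) (b, y) - Dx (Dy F) (a, y)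
      = ∫ x in a..b, Dx (Dx (Dy F)) (x, y) := by
    intro y hy
    have hder : ∀ x ∈ Set.uIcc a b, HasDerivAt (fun t => Dx (Dy F) (t, y))
        (Dx (Dx (Dy F)) (x, y)) x := by
      intro x hx
      rw [Set.uIcc_of_le hab] at hx
      exact hasDerivAt_sliceX (hg2d _ (hmemU x y hx hy))
    have hint : IntervalIntegrable (fun x => Dx (Dx (Dy F)) (x, y)) volume a b := by
      apply ContinuousOn.intervalIntegrable
      rw [Set.uIcc_of_le hab]
      exact hg3.continuousOn.comp (Continuous.continuousOn (by fun_prop))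
        (fun x hx => hmemU x y hx hy)
    rw [intervalIntegral.integral_eq_sub_of_hasDerivAt hder hint]
  -- ## Step 3
  have step3 : (∫ y in c..d, (Dx (Dy F) (b, y) - Dx (Dy F) (a, y)) * R y)
      = ∫ y in c..d, ∫ x in a..b, Dx (Dx (Dy F)) (x, y) * R y := by
    apply intervalIntegral.integral_congr
    intro y hy
    dsimp only
    rw [Set.uIcc_of_le hcd] at hy
    rw [step2 y hy, intervalIntegral.integral_mul_const]
  -- ## Step 4 : Fubini swap
  have hPhic : ContinuousOn (fun p : ℝ × ℝ => Dx (Dx (Dy F)) p * R p.2)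
      (Set.Icc a b ×ˢ Set.Icc c d) :=
    (hg3.continuousOn.mono hKU).mul ((hRc.comp continuous_snd).continuousOn)
  have step4 : (∫ y in c..d, ∫ x in a..b, Dx (Dx (Dy F)) (x, y) * R y)
      = ∫ x in a..b, ∫ y in c..d, Dx (Dx (Dy F)) (x, y) * R y := by
    rw [intervalIntegral.integral_of_le hcd, intervalIntegral.integral_of_le hab]
    simp_rw [intervalIntegral.integral_of_le hab, intervalIntegral.integral_of_le hcd]
    apply MeasureTheory.integral_integral_swap
    rw [MeasureTheory.Measure.prod_restrict]
    have hcont : ContinuousOn (fun p : ℝ × ℝ => Dx (Dx (Dy F)) (p.2, p.1) * R p.1)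
        (Set.Icc c d ×ˢ Set.Icc a b) :=
      hPhic.comp (Continuous.continuousOn continuous_swap)
        (fun p hp => Set.mk_mem_prod hp.2 hp.1)
    exact (hcont.integrableOn_compact (isCompact_Icc.prod isCompact_Icc)).mono_set
      (Set.prod_mono Set.Ioc_subset_Icc_self Set.Ioc_subset_Icc_self)
  -- ## Step 5 : integration by parts in y
  have step5 : ∀ x ∈ Set.Icc a b, (∫ y in c..d, Dx (Dx (Dy F)) (x, y) * R y)
      = - ∫ y in c..d, Dx (Dx (Dy (Dy F))) (x, y) * S y := by
    intro x hx
    have hu' : ∀ y ∈ Set.uIcc c d, HasDerivAt (fun t => Dx (Dx (Dy F)) (x, t))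
        (Dy (Dx (Dx (Dy F))) (x, y)) y := by
      intro y hy; rw [Set.uIcc_of_le hcd] at hy
      exact hasDerivAt_sliceY (hg3d _ (hmemU x y hx hy))
    have hint1 : IntervalIntegrable (fun y => Dy (Dx (Dx (Dy F))) (x, y)) volume c d := by
      apply ContinuousOn.intervalIntegrable
      rw [Set.uIcc_of_le hcd]
      exact hg4.continuousOn.comp (Continuous.continuousOn (by fun_prop))
        (fun y hy => hmemU x y hx hy)
    have hint2 : IntervalIntegrable R volume c d := hRc.intervalIntegrable c d
    have hparts := intervalIntegral.integral_mul_deriv_eq_deriv_mul hu'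
      (fun y _ => hRd y) hint1 hint2
    rw [hparts, hS0c, hS0d]
    have hcg : (∫ y in c..d, Dy (Dx (Dx (Dy F))) (x, y) * S y)
        = ∫ y in c..d, Dx (Dx (Dy (Dy F))) (x, y) * S y := by
      apply intervalIntegral.integral_congr
      intro y hy
      dsimp only
      rw [Set.uIcc_of_le hcd] at hy
      rw [hg4k4 (x, y) (hmemU x y hx hy)]
    rw [hcg]; ring
  -- ## Step 6 : to a product set integral
  have hKScont : ContinuousOn (fun p : ℝ × ℝ => Dx (Dx (Dy (Dy F))) p * S p.2)
      (Set.Icc a b ×ˢ Set.Icc c d) :=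
    (hk4.continuousOn.mono hKU).mul ((hScont.comp continuous_snd).continuousOn)
  have hKSint : MeasureTheory.IntegrableOn (fun p : ℝ × ℝ => Dx (Dx (Dy (Dy F))) p * S p.2)
      (Set.Ioc a b ×ˢ Set.Ioc c d) ((volume : MeasureTheory.Measure ℝ).prod volume) := by
    rw [← MeasureTheory.Measure.volume_eq_prod]
    exact (hKScont.integrableOn_compact (isCompact_Icc.prod isCompact_Icc)).mono_set
      (Set.prod_mono Set.Ioc_subset_Icc_self Set.Ioc_subset_Icc_self)
  have step6 : (∫ x in a..b, ∫ y in c..d, Dx (Dx (Dy F)) (x, y) * R y)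
      = - ∫ p in (Set.Ioc a b ×ˢ Set.Ioc c d), Dx (Dx (Dy (Dy F))) p * S p.2
          ∂((volume : MeasureTheory.Measure ℝ).prod volume) := by
    have e1 : (∫ x in a..b, ∫ y in c..d, Dx (Dx (Dy F)) (x, y) * R y)
        = ∫ x in a..b, (- ∫ y in c..d, Dx (Dx (Dy (Dy F))) (x, y) * S y) :=
      intervalIntegral.integral_congr (fun x hx => by
        rw [Set.uIcc_of_le hab] at hx; exact step5 x hx)
    rw [e1, intervalIntegral.integral_neg]
    congr 1
    rw [MeasureTheory.setIntegral_prod _ hKSint]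
    rw [intervalIntegral.integral_of_le hab]
    simp_rw [intervalIntegral.integral_of_le hcd]
  -- ## lower bound for the H² seminorm of w
  set W := semiH2R w a b c d with hWdef
  have hWnn : 0 ≤ W := Real.sqrt_nonneg _
  have hsq2nn : (0:ℝ) ≤ ∫ x in a..b, ∫ y in c..d,
      ((pdx (pdx w) x y) ^ 2 + (pdx (pdy w) x y) ^ 2 + (pdy (pdx w) x y) ^ 2
        + (pdy (pdy w) x y) ^ 2) := by
    apply intervalIntegral.integral_nonneg hab
    intro x _
    apply intervalIntegral.integral_nonneg hcd
    intro y _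
    positivity
  have hW2 : W ^ 2 = ∫ x in a..b, ∫ y in c..d,
      ((pdx (pdx w) x y) ^ 2 + (pdx (pdy w) x y) ^ 2 + (pdy (pdx w) x y) ^ 2
        + (pdy (pdy w) x y) ^ 2) := by
    rw [hWdef, semiH2R, Real.sq_sqrt hsq2nn]
  have hpoly : ∀ x : ℝ, (∫ y in c..d, ((2 * c3 + 6 * c6 * x) ^ 2 + c4 ^ 2 + c4 ^ 2
        + (2 * c5 + 6 * c7 * y) ^ 2))
      = (((2 * c3 + 6 * c6 * x) ^ 2 + 2 * c4 ^ 2 + 4 * c5 ^ 2) * d + 12 * c5 * c7 * d ^ 2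
          + 12 * c7 ^ 2 * d ^ 3)
        - (((2 * c3 + 6 * c6 * x) ^ 2 + 2 * c4 ^ 2 + 4 * c5 ^ 2) * c + 12 * c5 * c7 * c ^ 2
          + 12 * c7 ^ 2 * c ^ 3) := by
    intro x
    have hder : ∀ t ∈ Set.uIcc c d, HasDerivAt
        (fun s : ℝ => ((2 * c3 + 6 * c6 * x) ^ 2 + 2 * c4 ^ 2 + 4 * c5 ^ 2) * s
          + 12 * c5 * c7 * s ^ 2 + 12 * c7 ^ 2 * s ^ 3)
        ((2 * c3 + 6 * c6 * x) ^ 2 + c4 ^ 2 + c4 ^ 2 + (2 * c5 + 6 * c7 * t) ^ 2) t := by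
      intro t _
      have H := (((hasDerivAt_id t).const_mul
          ((2 * c3 + 6 * c6 * x) ^ 2 + 2 * c4 ^ 2 + 4 * c5 ^ 2)).add
          ((hasDerivAt_pow 2 t).const_mul (12 * c5 * c7))).add
          ((hasDerivAt_pow 3 t).const_mul (12 * c7 ^ 2))
      exact H.congr_deriv (by push_cast; ring)
    have hint : IntervalIntegrable (fun t : ℝ => (2 * c3 + 6 * c6 * x) ^ 2 + c4 ^ 2 + c4 ^ 2
        + (2 * c5 + 6 * c7 * t) ^ 2) volume c d := Continuous.intervalIntegrable (by fun_prop) c d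
    exact intervalIntegral.integral_eq_sub_of_hasDerivAt hder hint
  have hWsq : 4 * (A ^ 2 * h ^ 2 + B ^ 2 * h ^ 4) ≤ W ^ 2 := by
    rw [hW2]
    have e : (∫ x in a..b, ∫ y in c..d, ((pdx (pdx w) x y) ^ 2 + (pdx (pdy w) x y) ^ 2
          + (pdy (pdx w) x y) ^ 2 + (pdy (pdy w) x y) ^ 2))
        = ∫ x in a..b, ((((2 * c3 + 6 * c6 * x) ^ 2 + 2 * c4 ^ 2 + 4 * c5 ^ 2) * d
            + 12 * c5 * c7 * d ^ 2 + 12 * c7 ^ 2 * d ^ 3)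
          - (((2 * c3 + 6 * c6 * x) ^ 2 + 2 * c4 ^ 2 + 4 * c5 ^ 2) * c
            + 12 * c5 * c7 * c ^ 2 + 12 * c7 ^ 2 * c ^ 3)) := by
      simp only [hpxx, hpxy, hpyx, hpyy]
      simp only [hpoly]
    rw [e]
    have hge : ∀ x ∈ Set.Icc a b, (2 * c4 ^ 2 + 4 * c5 ^ 2) * (d - c)
        + 12 * c5 * c7 * (d ^ 2 - c ^ 2) + 12 * c7 ^ 2 * (d ^ 3 - c ^ 3)
        ≤ ((((2 * c3 + 6 * c6 * x) ^ 2 + 2 * c4 ^ 2 + 4 * c5 ^ 2) * d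
            + 12 * c5 * c7 * d ^ 2 + 12 * c7 ^ 2 * d ^ 3)
          - (((2 * c3 + 6 * c6 * x) ^ 2 + 2 * c4 ^ 2 + 4 * c5 ^ 2) * c
            + 12 * c5 * c7 * c ^ 2 + 12 * c7 ^ 2 * c ^ 3)) := by
      intro x _
      have hdiff : ((((2 * c3 + 6 * c6 * x) ^ 2 + 2 * c4 ^ 2 + 4 * c5 ^ 2) * d
            + 12 * c5 * c7 * d ^ 2 + 12 * c7 ^ 2 * d ^ 3)
          - (((2 * c3 + 6 * c6 * x) ^ 2 + 2 * c4 ^ 2 + 4 * c5 ^ 2) * c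
            + 12 * c5 * c7 * c ^ 2 + 12 * c7 ^ 2 * c ^ 3))
          - ((2 * c4 ^ 2 + 4 * c5 ^ 2) * (d - c)
            + 12 * c5 * c7 * (d ^ 2 - c ^ 2) + 12 * c7 ^ 2 * (d ^ 3 - c ^ 3))
          = (2 * c3 + 6 * c6 * x) ^ 2 * (d - c) := by ring
      have hnn : 0 ≤ (2 * c3 + 6 * c6 * x) ^ 2 * (d - c) :=
        mul_nonneg (sq_nonneg _) (by linarith)
      linarith
    calc 4 * (A ^ 2 * h ^ 2 + B ^ 2 * h ^ 4)
        ≤ (b - a) * ((2 * c4 ^ 2 + 4 * c5 ^ 2) * (d - c)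
          + 12 * c5 * c7 * (d ^ 2 - c ^ 2) + 12 * c7 ^ 2 * (d ^ 3 - c ^ 3)) := by
          rw [hA, hB, hba, hc, hd]
          have hdiff : (2 * h) * ((2 * c4 ^ 2 + 4 * c5 ^ 2) * ((x2c + h) - (x2c - h))
              + 12 * c5 * c7 * ((x2c + h) ^ 2 - (x2c - h) ^ 2)
              + 12 * c7 ^ 2 * ((x2c + h) ^ 3 - (x2c - h) ^ 3))
              - 4 * ((2 * c5 + 6 * c7 * x2c) ^ 2 * h ^ 2 + (3 * c7) ^ 2 * h ^ 4)
              = 8 * (c4 * h) ^ 2 + 12 * (c7 * h ^ 2) ^ 2 := by ring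
          have h1 : (0:ℝ) ≤ 8 * (c4 * h) ^ 2 := by positivity
          have h2 : (0:ℝ) ≤ 12 * (c7 * h ^ 2) ^ 2 := by positivity
          linarith
      _ = ∫ _x in a..b, ((2 * c4 ^ 2 + 4 * c5 ^ 2) * (d - c)
          + 12 * c5 * c7 * (d ^ 2 - c ^ 2) + 12 * c7 ^ 2 * (d ^ 3 - c ^ 3)) := by
          rw [intervalIntegral.integral_const, smul_eq_mul]
      _ ≤ _ := intervalIntegral.integral_mono_on hab intervalIntegrable_const
          (Continuous.intervalIntegrable (by fun_prop) a b) hge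
  have hMW : M ≤ h * W := by
    have hp0 : 0 ≤ |A| * h := by positivity
    have hq0 : 0 ≤ |B| * h ^ 2 := by positivity
    have hWsq' : 4 * ((|A| * h) ^ 2 + (|B| * h ^ 2) ^ 2) ≤ W ^ 2 := by
      have e1 : (|A| * h) ^ 2 = A ^ 2 * h ^ 2 := by rw [mul_pow, sq_abs]
      have e2 : (|B| * h ^ 2) ^ 2 = B ^ 2 * h ^ 4 := by rw [mul_pow, sq_abs]; ring
      rw [e1, e2]; exact hWsq
    have hsum : 0 ≤ |A| * h + |B| * h ^ 2 + W := by positivity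
    have key : |A| * h + |B| * h ^ 2 ≤ W := by
      have h1 : (|A| * h + |B| * h ^ 2) ^ 2 ≤ W ^ 2 := by
        nlinarith [sq_nonneg (|A| * h - |B| * h ^ 2), hWsq']
      calc |A| * h + |B| * h ^ 2 = Real.sqrt ((|A| * h + |B| * h ^ 2) ^ 2) :=
            (Real.sqrt_sq (by positivity)).symm
        _ ≤ Real.sqrt (W ^ 2) := Real.sqrt_le_sqrt h1
        _ = W := Real.sqrt_sq hWnn
    have hM1 : M ≤ h * (|A| * h + |B| * h ^ 2) := by
      rw [hMdef]
      nlinarith [mul_nonneg (abs_nonneg A) (sq_nonneg h),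
        mul_nonneg (mul_nonneg (abs_nonneg B) hh.le) (sq_nonneg h)]
    calc M ≤ h * (|A| * h + |B| * h ^ 2) := hM1
      _ ≤ h * W := mul_le_mul_of_nonneg_left key hh.le
  -- ## the H⁴ seminorm bound
  set N := semiH4R u a b c d with hNdef
  have hNnn : 0 ≤ N := Real.sqrt_nonneg _
  have hH4nn : (0:ℝ) ≤ ∫ x in a..b, ∫ y in c..d,
      ((pdx (pdx (pdx (pdx u))) x y) ^ 2 + 4 * (pdx (pdx (pdx (pdy u))) x y) ^ 2
        + 6 * (pdx (pdx (pdy (pdy u))) x y) ^ 2 + 4 * (pdx (pdy (pdy (pdy u))) x y) ^ 2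
        + (pdy (pdy (pdy (pdy u))) x y) ^ 2) := by
    apply intervalIntegral.integral_nonneg hab
    intro x _
    apply intervalIntegral.integral_nonneg hcd
    intro y _
    positivity
  have hN2 : N ^ 2 = ∫ x in a..b, ∫ y in c..d,
      ((pdx (pdx (pdx (pdx u))) x y) ^ 2 + 4 * (pdx (pdx (pdx (pdy u))) x y) ^ 2
        + 6 * (pdx (pdx (pdy (pdy u))) x y) ^ 2 + 4 * (pdx (pdy (pdy (pdy u))) x y) ^ 2
        + (pdy (pdy (pdy (pdy u))) x y) ^ 2) := by
    rw [hNdef, semiH4R, Real.sq_sqrt hH4nn]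
  have hPsi4'c : ContinuousOn (fun p : ℝ × ℝ => (Dx (Dx (Dx (Dx F))) p) ^ 2
      + 4 * (Dx (Dx (Dx (Dy F))) p) ^ 2 + 6 * (Dx (Dx (Dy (Dy F))) p) ^ 2
      + 4 * (Dx (Dy (Dy (Dy F))) p) ^ 2 + (Dy (Dy (Dy (Dy F))) p) ^ 2) U :=
    ((((hx4.continuousOn.pow 2).add (continuousOn_const.mul (hm31.continuousOn.pow 2))).add
      (continuousOn_const.mul (hk4.continuousOn.pow 2))).add
      (continuousOn_const.mul (hm13.continuousOn.pow 2))).add (hm04.continuousOn.pow 2)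
  have hEq4 : Set.EqOn (fun p : ℝ × ℝ => (Dx (Dx (Dx (Dx F))) p) ^ 2
      + 4 * (Dx (Dx (Dx (Dy F))) p) ^ 2 + 6 * (Dx (Dx (Dy (Dy F))) p) ^ 2
      + 4 * (Dx (Dy (Dy (Dy F))) p) ^ 2 + (Dy (Dy (Dy (Dy F))) p) ^ 2)
      (fun p : ℝ × ℝ => (pdx (pdx (pdx (pdx u))) p.1 p.2) ^ 2
        + 4 * (pdx (pdx (pdx (pdy u))) p.1 p.2) ^ 2
        + 6 * (pdx (pdx (pdy (pdy u))) p.1 p.2) ^ 2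
        + 4 * (pdx (pdy (pdy (pdy u))) p.1 p.2) ^ 2
        + (pdy (pdy (pdy (pdy u))) p.1 p.2) ^ 2) (Set.Icc a b ×ˢ Set.Icc c d) := by
    intro p hp
    have hpU : p ∈ U := hKU hp
    dsimp only
    rw [ha4 p hpU, hb4 p hpU, hf4 p hpU, hc4 p hpU, hd4 p hpU]
  have hEsub : (Set.Ioc a b ×ˢ Set.Ioc c d) ⊆ Set.Icc a b ×ˢ Set.Icc c d :=
    Set.prod_mono Set.Ioc_subset_Icc_self Set.Ioc_subset_Icc_self
  have hEmeas : MeasurableSet (Set.Ioc a b ×ˢ Set.Ioc c d) :=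
    measurableSet_Ioc.prod measurableSet_Ioc
  have hPsi4int : MeasureTheory.IntegrableOn (fun p : ℝ × ℝ =>
      (pdx (pdx (pdx (pdx u))) p.1 p.2) ^ 2 + 4 * (pdx (pdx (pdx (pdy u))) p.1 p.2) ^ 2
        + 6 * (pdx (pdx (pdy (pdy u))) p.1 p.2) ^ 2 + 4 * (pdx (pdy (pdy (pdy u))) p.1 p.2) ^ 2
        + (pdy (pdy (pdy (pdy u))) p.1 p.2) ^ 2)
      (Set.Ioc a b ×ˢ Set.Ioc c d) ((volume : MeasureTheory.Measure ℝ).prod volume) := by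
    rw [← MeasureTheory.Measure.volume_eq_prod]
    refine MeasureTheory.IntegrableOn.mono_set ?_ hEsub
    exact MeasureTheory.IntegrableOn.congr_fun
      ((hPsi4'c.mono hKU).integrableOn_compact (isCompact_Icc.prod isCompact_Icc)) hEq4
      (measurableSet_Icc.prod measurableSet_Icc)
  have hIter4 : (∫ p in (Set.Ioc a b ×ˢ Set.Ioc c d),
      ((pdx (pdx (pdx (pdx u))) p.1 p.2) ^ 2 + 4 * (pdx (pdx (pdx (pdy u))) p.1 p.2) ^ 2
        + 6 * (pdx (pdx (pdy (pdy u))) p.1 p.2) ^ 2 + 4 * (pdx (pdy (pdy (pdy u))) p.1 p.2) ^ 2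
        + (pdy (pdy (pdy (pdy u))) p.1 p.2) ^ 2)
      ∂((volume : MeasureTheory.Measure ℝ).prod volume)) = N ^ 2 := by
    rw [MeasureTheory.setIntegral_prod _ hPsi4int, hN2]
    rw [intervalIntegral.integral_of_le hab]
    simp_rw [intervalIntegral.integral_of_le hcd]
  have hK4int : MeasureTheory.IntegrableOn (fun p : ℝ × ℝ => Dx (Dx (Dy (Dy F))) p)
      (Set.Ioc a b ×ˢ Set.Ioc c d) ((volume : MeasureTheory.Measure ℝ).prod volume) := by
    rw [← MeasureTheory.Measure.volume_eq_prod]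
    exact ((hk4.continuousOn.mono hKU).integrableOn_compact
      (isCompact_Icc.prod isCompact_Icc)).mono_set hEsub
  have hK4sqint : MeasureTheory.IntegrableOn (fun p : ℝ × ℝ => (Dx (Dx (Dy (Dy F))) p) ^ 2)
      (Set.Ioc a b ×ˢ Set.Ioc c d) ((volume : MeasureTheory.Measure ℝ).prod volume) := by
    rw [← MeasureTheory.Measure.volume_eq_prod]
    exact (((hk4.continuousOn.mono hKU).pow 2).integrableOn_compact
      (isCompact_Icc.prod isCompact_Icc)).mono_set hEsub
  have hK4sq_le : (∫ p in (Set.Ioc a b ×ˢ Set.Ioc c d), (Dx (Dx (Dy (Dy F))) p) ^ 2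
      ∂((volume : MeasureTheory.Measure ℝ).prod volume)) ≤ N ^ 2 := by
    rw [← hIter4]
    apply MeasureTheory.setIntegral_mono_on hK4sqint hPsi4int hEmeas
    intro p hp
    have hpU : p ∈ U := hKU (hEsub hp)
    rw [ha4 p hpU, hb4 p hpU, hf4 p hpU, hc4 p hpU, hd4 p hpU]
    have t1 := sq_nonneg (Dx (Dx (Dx (Dx F))) p)
    have t2 := sq_nonneg (Dx (Dx (Dx (Dy F))) p)
    have t3 := sq_nonneg (Dx (Dx (Dy (Dy F))) p)
    have t4 := sq_nonneg (Dx (Dy (Dy (Dy F))) p)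
    have t5 := sq_nonneg (Dy (Dy (Dy (Dy F))) p)
    linarith
  -- ## volume of the cell
  have hvolE : ((((volume : MeasureTheory.Measure ℝ).prod volume)
      (Set.Ioc a b ×ˢ Set.Ioc c d)).toReal) ≤ (2 * h) ^ 2 := by
    rw [MeasureTheory.Measure.prod_prod, Real.volume_Ioc, Real.volume_Ioc, hba, hdc]
    rw [← ENNReal.ofReal_mul (by positivity)]
    rw [ENNReal.toReal_ofReal (by positivity)]
    nlinarith
  have hfinE : (((volume : MeasureTheory.Measure ℝ).prod volume)
      (Set.Ioc a b ×ˢ Set.Ioc c d)) < ⊤ := by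
    rw [MeasureTheory.Measure.prod_prod, Real.volume_Ioc, Real.volume_Ioc]
    exact ENNReal.mul_lt_top ENNReal.ofReal_lt_top ENNReal.ofReal_lt_top
  have hL1 : (∫ p in (Set.Ioc a b ×ˢ Set.Ioc c d), |Dx (Dx (Dy (Dy F))) p|
      ∂((volume : MeasureTheory.Measure ℝ).prod volume)) ≤ 2 * h * N :=
    l1_le_sqrt_l2 _ _ hK4int hK4sqint (by positivity) hNnn hvolE hfinE hK4sq_le
  -- ## final estimate
  have habs_le : ∀ p ∈ (Set.Ioc a b ×ˢ Set.Ioc c d),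
      |Dx (Dx (Dy (Dy F))) p * S p.2| ≤ M * |Dx (Dx (Dy (Dy F))) p| := by
    intro p hp
    rw [abs_mul]
    have h2 : |S p.2| ≤ M := hSb p.2 (Set.Ioc_subset_Icc_self hp.2)
    calc |Dx (Dx (Dy (Dy F))) p| * |S p.2| ≤ |Dx (Dx (Dy (Dy F))) p| * M :=
        mul_le_mul_of_nonneg_left h2 (abs_nonneg _)
      _ = M * |Dx (Dx (Dy (Dy F))) p| := mul_comm _ _
  have hstep7 : |∫ p in (Set.Ioc a b ×ˢ Set.Ioc c d), Dx (Dx (Dy (Dy F))) p * S p.2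
      ∂((volume : MeasureTheory.Measure ℝ).prod volume)|
      ≤ M * ∫ p in (Set.Ioc a b ×ˢ Set.Ioc c d), |Dx (Dx (Dy (Dy F))) p|
        ∂((volume : MeasureTheory.Measure ℝ).prod volume) := by
    calc |∫ p in (Set.Ioc a b ×ˢ Set.Ioc c d), Dx (Dx (Dy (Dy F))) p * S p.2
        ∂((volume : MeasureTheory.Measure ℝ).prod volume)|
        ≤ ∫ p in (Set.Ioc a b ×ˢ Set.Ioc c d), |Dx (Dx (Dy (Dy F))) p * S p.2|
          ∂((volume : MeasureTheory.Measure ℝ).prod volume) := by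
          have := MeasureTheory.norm_integral_le_integral_norm
            (μ := (((volume : MeasureTheory.Measure ℝ).prod volume)).restrict
              (Set.Ioc a b ×ˢ Set.Ioc c d))
            (f := fun p : ℝ × ℝ => Dx (Dx (Dy (Dy F))) p * S p.2)
          simpa only [Real.norm_eq_abs] using this
      _ ≤ ∫ p in (Set.Ioc a b ×ˢ Set.Ioc c d), M * |Dx (Dx (Dy (Dy F))) p|
          ∂((volume : MeasureTheory.Measure ℝ).prod volume) :=
          MeasureTheory.setIntegral_mono_on hKSint.abs ((hK4int.abs).const_mul M) hEmeas habs_le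
      _ = M * ∫ p in (Set.Ioc a b ×ˢ Set.Ioc c d), |Dx (Dx (Dy (Dy F))) p|
          ∂((volume : MeasureTheory.Measure ℝ).prod volume) :=
          MeasureTheory.integral_const_mul M _
  rw [step1, step3, step4, step6, abs_neg]
  calc |∫ p in (Set.Ioc a b ×ˢ Set.Ioc c d), Dx (Dx (Dy (Dy F))) p * S p.2
      ∂((volume : MeasureTheory.Measure ℝ).prod volume)|
      ≤ M * ∫ p in (Set.Ioc a b ×ˢ Set.Ioc c d), |Dx (Dx (Dy (Dy F))) p|
        ∂((volume : MeasureTheory.Measure ℝ).prod volume) := hstep7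
    _ ≤ M * (2 * h * N) := mul_le_mul_of_nonneg_left hL1 hMnn
    _ ≤ (h * W) * (2 * h * N) := mul_le_mul_of_nonneg_right hMW (by positivity)
    _ = 2 * h ^ 2 * N * W := by ring
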